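/- Suppose F_s(x,s)·s ≥ 0 for a.e. x ∈ ℝ^N and all s ∈ ℝ, λ ≤ 0 and ω < m. If v ∈ H¹(ℝ^{N+1}_+) is a weak solution of the extension system −Δv + m²v = 0 in ℝ^{N+1}_+ with boundary condition −∂v/∂x_{N+1} = ωv + λ(W∗v²)v − F_s(x,v) on ℝ^N×{0}, where W ≥ 0, then v ≡ 0. -/

import Mathlib

open MeasureTheory Filter

noncomputable def emb (N : ℕ) (x : EuclideanSpace ℝ (Fin N)) : EuclideanSpace ℝ (Fin (N+1)) :=
  (EuclideanSpace.equiv (Fin (N+1)) ℝ).symm (fun i => if h : (i : ℕ) < N then x ⟨i, h⟩ else 0)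

/-- The open upper half space `ℝ^N × (0,∞)`. -/
def upper (N : ℕ) : Set (EuclideanSpace ℝ (Fin (N+1))) := {X | 0 < X (Fin.last N)}

/-- Standard basis vector. -/
noncomputable def eb (N : ℕ) (i : Fin (N+1)) : EuclideanSpace ℝ (Fin (N+1)) :=
  EuclideanSpace.single i 1

/-- Membership in `H¹(ℝ^{N+1}_+)` (pointwise-defined representative). -/
def H1 (N : ℕ) (v : EuclideanSpace ℝ (Fin (N+1)) → ℝ) : Prop :=
  Differentiable ℝ v ∧ MemLp v 2 (volume.restrict (upper N)) ∧
    MemLp (fun X => ‖fderiv ℝ v X‖) 2 (volume.restrict (upper N))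

/-- Weak solution of the extension system `−Δv + m²v = 0` in `ℝ^{N+1}_+` with
boundary condition `−∂v/∂x_{N+1} = ωv + λ(W∗v²)v − F_s(x,v)` on `ℝ^N × {0}`:
tested against every `w ∈ H¹(ℝ^{N+1}_+)`. -/
def IsWeakSolution (N : ℕ) (m ω lam : ℝ)
    (W : EuclideanSpace ℝ (Fin N) → ℝ) (Fs : EuclideanSpace ℝ (Fin N) → ℝ → ℝ)
    (v : EuclideanSpace ℝ (Fin (N+1)) → ℝ) : Prop :=
  ∀ w : EuclideanSpace ℝ (Fin (N+1)) → ℝ, H1 N w →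
    (∫ X in upper N,
        ((inner ℝ (gradient v X) (gradient w X) : ℝ) + m^2 * v X * w X)) =
      ∫ x : EuclideanSpace ℝ (Fin N),
        (ω * v (emb N x)
          + lam * (∫ y : EuclideanSpace ℝ (Fin N), W (x - y) * (v (emb N y))^2) * v (emb N x)
          - Fs x (v (emb N x))) * w (emb N x)

noncomputable def Psi (N : ℕ) : EuclideanSpace ℝ (Fin (N+1)) ≃ᵐ (EuclideanSpace ℝ (Fin N)) × ℝ :=
  (MeasurableEquiv.toLp 2 (Fin (N+1) → ℝ)).symm.trans <|
    (MeasurableEquiv.piFinSuccAbove (fun _ : Fin (N+1) => ℝ) (Fin.last N)).trans <|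
      (MeasurableEquiv.prodComm).trans <|
        ((MeasurableEquiv.toLp 2 (Fin N → ℝ)).symm.symm.prodCongr (MeasurableEquiv.refl ℝ))

lemma Psi_snd (N : ℕ) (X : EuclideanSpace ℝ (Fin (N+1))) : (Psi N X).2 = X (Fin.last N) := by
  simp [Psi, MeasurableEquiv.trans_apply, MeasurableEquiv.prodCongr, MeasurableEquiv.prodComm,
    MeasurableEquiv.piFinSuccAbove]

lemma Psi_symm_apply (N : ℕ) (x : EuclideanSpace ℝ (Fin N)) (t : ℝ) :
    (Psi N).symm (x, t) = emb N x + t • eb N (Fin.last N) := by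
  have h : ((Psi N).symm (x, t) : EuclideanSpace ℝ (Fin (N+1)))
      = WithLp.toLp 2 (Fin.snoc (fun i => x i) t : Fin (N+1) → ℝ) := by
    simp [Psi, MeasurableEquiv.trans_apply, MeasurableEquiv.prodCongr, MeasurableEquiv.prodComm,
      MeasurableEquiv.piFinSuccAbove, Fin.insertNthEquiv]
  rw [h]
  ext j
  induction j using Fin.lastCases with
  | last =>
    simp [emb, eb, PiLp.add_apply, PiLp.smul_apply, EuclideanSpace.single_apply, Fin.snoc_last]
  | cast i =>
    simp [emb, eb, PiLp.add_apply, PiLp.smul_apply, EuclideanSpace.single_apply,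
      Fin.snoc_castSucc, i.isLt, (Fin.castSucc_lt_last i).ne]

lemma measurePreserving_Psi (N : ℕ) :
    MeasurePreserving (Psi N) volume ((volume : Measure (EuclideanSpace ℝ (Fin N))).prod volume) := by
  have h1 := EuclideanSpace.volume_preserving_symm_measurableEquiv_toLp (Fin (N+1))
  have h2 := volume_preserving_piFinSuccAbove (fun _ : Fin (N+1) => ℝ) (Fin.last N)
  have h3 : MeasurePreserving (Prod.swap : ℝ × (Fin N → ℝ) → (Fin N → ℝ) × ℝ) volume volume :=
    Measure.measurePreserving_swap
  have h4 := ((EuclideanSpace.volume_preserving_symm_measurableEquiv_toLp (Fin N)).symm).prod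
    (MeasurePreserving.id (volume : Measure ℝ))
  have : (⇑(Psi N) : EuclideanSpace ℝ (Fin (N+1)) → _)
      = (Prod.map (⇑(MeasurableEquiv.toLp 2 (Fin N → ℝ)).symm.symm) id ∘ Prod.swap)
        ∘ (⇑(MeasurableEquiv.piFinSuccAbove (fun _ : Fin (N+1) => ℝ) (Fin.last N)))
        ∘ (⇑(MeasurableEquiv.toLp 2 (Fin (N+1) → ℝ)).symm) := rfl
  rw [this]
  exact ((h4.comp h3).comp h2).comp h1

lemma measurableSet_upper (N : ℕ) : MeasurableSet (upper N) := by
  have : upper N = ⇑(Psi N) ⁻¹' (Set.univ ×ˢ Set.Ioi (0:ℝ)) := by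
    ext X
    simp [upper, Set.mem_preimage, Psi_snd]
  rw [this]
  exact (Psi N).measurable (MeasurableSet.univ.prod measurableSet_Ioi)

lemma measurePreserving_Psi_symm_restrict (N : ℕ) :
    MeasurePreserving (⇑(Psi N).symm)
      ((volume : Measure (EuclideanSpace ℝ (Fin N))).prod ((volume : Measure ℝ).restrict (Set.Ioi 0)))
      (volume.restrict (upper N)) := by
  have h := ((measurePreserving_Psi N).symm (Psi N)).restrict_preimage (measurableSet_upper N)
  have hpre : ⇑(Psi N).symm ⁻¹' (upper N) = Set.univ ×ˢ Set.Ioi (0:ℝ) := by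
    ext p
    obtain ⟨x, t⟩ := p
    simp only [Set.mem_preimage, upper, Set.mem_setOf_eq, Psi_symm_apply, Set.mem_prod,
      Set.mem_univ, true_and, Set.mem_Ioi]
    simp [emb, eb, PiLp.add_apply, PiLp.smul_apply, EuclideanSpace.single_apply]
  rw [hpre] at h
  rwa [← Measure.prod_restrict, Measure.restrict_univ] at h

lemma continuous_emb (N : ℕ) : Continuous (emb N) := by
  unfold emb
  refine Continuous.comp ?_ ?_
  · exact (EuclideanSpace.equiv (Fin (N+1)) ℝ).symm.continuous
  · refine continuous_pi fun i => ?_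
    by_cases h : (i : ℕ) < N
    · simp only [dif_pos h]
      exact ((continuous_apply (⟨i, h⟩ : Fin N)).comp (EuclideanSpace.equiv (Fin N) ℝ).continuous)
    · simp only [dif_neg h]
      exact continuous_const

lemma norm_eb (N : ℕ) : ‖eb N (Fin.last N)‖ = 1 := by
  simp [eb, EuclideanSpace.norm_single]

lemma abs_fderiv_last_le (N : ℕ) (v : EuclideanSpace ℝ (Fin (N+1)) → ℝ)
    (X : EuclideanSpace ℝ (Fin (N+1))) :
    |fderiv ℝ v X (eb N (Fin.last N))| ≤ ‖fderiv ℝ v X‖ := by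
  have h := (fderiv ℝ v X).le_opNorm (eb N (Fin.last N))
  rw [norm_eb, mul_one] at h
  simpa using h

lemma hasDerivAt_slice {N : ℕ} {v : EuclideanSpace ℝ (Fin (N+1)) → ℝ}
    (hv : Differentiable ℝ v) (x : EuclideanSpace ℝ (Fin N)) (t : ℝ) :
    HasDerivAt (fun s => v ((Psi N).symm (x, s)))
      (fderiv ℝ v ((Psi N).symm (x, t)) (eb N (Fin.last N))) t := by
  simp only [Psi_symm_apply]
  have hline : HasDerivAt (fun s : ℝ => emb N x + s • eb N (Fin.last N)) (eb N (Fin.last N)) t := by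
    simpa using ((hasDerivAt_id t).smul_const (eb N (Fin.last N))).const_add (emb N x)
  exact ((hv _).hasFDerivAt.comp_hasDerivAt t hline)

/-- The trace inequality. -/
lemma trace_ineq (N : ℕ) (m : ℝ) (hm : 0 < m) (v : EuclideanSpace ℝ (Fin (N+1)) → ℝ)
    (hdiff : Differentiable ℝ v)
    (hv2 : MemLp v 2 (volume.restrict (upper N)))
    (hg2 : MemLp (fun X => ‖fderiv ℝ v X‖) 2 (volume.restrict (upper N))) :
    Integrable (fun x => (v (emb N x))^2) ∧
    ∫ x, (v (emb N x))^2 ≤ m⁻¹ * ∫ X in upper N, (‖fderiv ℝ v X‖^2 + m^2 * v X^2) := by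
  set vt : EuclideanSpace ℝ (Fin (N+1)) → ℝ :=
    fun X => fderiv ℝ v X (eb N (Fin.last N)) with hvt_def
  have hvt_meas : Measurable vt := measurable_fderiv_apply_const ℝ v _
  have hv2int : Integrable (fun X => v X ^ 2) (volume.restrict (upper N)) := hv2.integrable_sq
  have hg2int : Integrable (fun X => ‖fderiv ℝ v X‖ ^ 2) (volume.restrict (upper N)) :=
    hg2.integrable_sq
  have hvtsq : ∀ X, vt X ^ 2 ≤ ‖fderiv ℝ v X‖ ^ 2 := fun X => by
    have := abs_fderiv_last_le N v X
    nlinarith [abs_nonneg (vt X), le_abs_self (vt X), neg_abs_le (vt X)]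
  have hvt2int : Integrable (fun X => vt X ^ 2) (volume.restrict (upper N)) := by
    refine Integrable.mono' hg2int ((hvt_meas.pow_const 2).aestronglyMeasurable) ?_
    exact Eventually.of_forall fun X => by
      rw [Real.norm_eq_abs, abs_of_nonneg (sq_nonneg _)]; exact hvtsq X
  -- the function whose slice integrals dominate the trace
  set g : EuclideanSpace ℝ (Fin (N+1)) → ℝ := fun X => m * v X ^ 2 + m⁻¹ * vt X ^ 2 with hgdef
  have hg_int : Integrable g (volume.restrict (upper N)) :=
    (hv2int.const_mul m).add (hvt2int.const_mul m⁻¹)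
  set f2 : (EuclideanSpace ℝ (Fin N)) × ℝ → ℝ := fun p => g ((Psi N).symm p) with hf2def
  have hMP := measurePreserving_Psi_symm_restrict N
  have hemb := ((Psi N).symm).measurableEmbedding
  have hf2 : Integrable f2 ((volume : Measure (EuclideanSpace ℝ (Fin N))).prod
      ((volume : Measure ℝ).restrict (Set.Ioi 0))) :=
    (hMP.integrable_comp hg_int.aestronglyMeasurable).mpr hg_int
  set q : (EuclideanSpace ℝ (Fin N)) × ℝ → ℝ := fun p => v ((Psi N).symm p) ^ 2 with hqdef
  have hq : Integrable q ((volume : Measure (EuclideanSpace ℝ (Fin N))).prod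
      ((volume : Measure ℝ).restrict (Set.Ioi 0))) :=
    (hMP.integrable_comp hv2int.aestronglyMeasurable).mpr hv2int
  set φ : EuclideanSpace ℝ (Fin N) → ℝ :=
    fun x => ∫ t, f2 (x, t) ∂((volume : Measure ℝ).restrict (Set.Ioi 0)) with hφdef
  have hφ_int : Integrable φ volume := hf2.integral_prod_left
  have hφ_eq : ∫ x, φ x = ∫ X in upper N, g X := by
    rw [hφdef, ← integral_prod _ hf2]
    exact hMP.integral_comp hemb g
  -- pointwise trace bound, a.e. in x
  have hae : ∀ᵐ x : EuclideanSpace ℝ (Fin N), (v (emb N x))^2 ≤ φ x := by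
    filter_upwards [hf2.prod_right_ae, hq.prod_right_ae] with x hfx hqx
    set u : ℝ → ℝ := fun t => v ((Psi N).symm (x, t)) with hudef
    set ut : ℝ → ℝ := fun t => vt ((Psi N).symm (x, t)) with hutdef
    have hud : ∀ t, HasDerivAt u (ut t) t := fun t => hasDerivAt_slice hdiff x t
    set G : ℝ → ℝ := fun t => u t ^ 2 with hGdef
    set G' : ℝ → ℝ := fun t => 2 * u t * ut t with hG'def
    have hGd : ∀ t, HasDerivAt G (G' t) t := fun t => by
      simpa [hG'def, mul_comm, mul_assoc, mul_left_comm] using (hud t).fun_pow 2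
    have hbound : ∀ t, |G' t| ≤ f2 (x, t) := fun t => by
      have h1 : f2 (x, t) = m * u t ^ 2 + m⁻¹ * ut t ^ 2 := rfl
      rw [h1, hG'def]
      have e1 : (m * u t - ut t)^2 / m = m * u t^2 - 2 * u t * ut t + m⁻¹ * ut t^2 := by
        field_simp; ring
      have e2 : (m * u t + ut t)^2 / m = m * u t^2 + 2 * u t * ut t + m⁻¹ * ut t^2 := by
        field_simp; ring
      have k1 : 0 ≤ (m * u t - ut t)^2 / m := div_nonneg (sq_nonneg _) hm.le
      have k2 : 0 ≤ (m * u t + ut t)^2 / m := div_nonneg (sq_nonneg _) hm.le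
      rw [e1] at k1; rw [e2] at k2
      rcases abs_cases (2 * u t * ut t) with ⟨he, _⟩ | ⟨he, _⟩ <;> rw [he] <;> linarith
    have hucont : Continuous u := by
      have : Continuous (fun t : ℝ => (Psi N).symm (x, t)) := by
        simp only [Psi_symm_apply]
        exact continuous_const.add (continuous_id.smul continuous_const)
      exact hdiff.continuous.comp this
    have hutmeas : Measurable ut := by
      have : Measurable (fun t : ℝ => (Psi N).symm (x, t)) :=
        ((Psi N).symm).measurable.comp (measurable_const.prodMk measurable_id)
      exact hvt_meas.comp this
    have hG'meas : AEStronglyMeasurable G' ((volume : Measure ℝ).restrict (Set.Ioi 0)) :=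
      (((hucont.measurable.const_mul 2).mul hutmeas)).aestronglyMeasurable
    have hG'int : IntegrableOn G' (Set.Ioi 0) volume := by
      refine Integrable.mono' hfx hG'meas (Eventually.of_forall fun t => ?_)
      simpa using hbound t
    have hGint : IntegrableOn G (Set.Ioi 0) volume := hqx
    -- FTC
    have hftc : ∀ T : ℝ, 0 ≤ T → G T = G 0 + ∫ t in (0:ℝ)..T, G' t := by
      intro T hT
      have hii : IntervalIntegrable G' volume 0 T := by
        rw [intervalIntegrable_iff, Set.uIoc_of_le hT]
        exact hG'int.mono_set Set.Ioc_subset_Ioi_self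
      have := intervalIntegral.integral_eq_sub_of_hasDerivAt (fun t _ => hGd t) hii
      linarith [this]
    set A : ℝ := ∫ t in Set.Ioi (0:ℝ), G' t with hAdef
    have hten : Tendsto G atTop (nhds (G 0 + A)) := by
      have h1 : Tendsto (fun T : ℝ => G 0 + ∫ t in (0:ℝ)..T, G' t) atTop (nhds (G 0 + A)) :=
        tendsto_const_nhds.add (intervalIntegral_tendsto_integral_Ioi 0 hG'int tendsto_id)
      refine h1.congr' ?_
      filter_upwards [eventually_ge_atTop (0:ℝ)] with T hT
      exact (hftc T hT).symm
    have hL0 : G 0 + A = 0 := by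
      by_contra hne
      have hLpos : 0 < G 0 + A := by
        rcases lt_or_gt_of_ne hne with h | h
        · exfalso
          have : 0 ≤ G 0 + A := ge_of_tendsto hten (Eventually.of_forall fun T => sq_nonneg _)
          linarith
        · exact h
      have hev : ∀ᶠ T in atTop, (G 0 + A) / 2 < G T :=
        hten.eventually (eventually_gt_nhds (by linarith))
      obtain ⟨T₀, hT₀⟩ := hev.exists_forall_of_atTop
      set T₁ : ℝ := max T₀ 0 with hT₁def
      have hsub : Set.Ioi T₁ ⊆ {t : ℝ | (G 0 + A) / 2 ≤ G t} := fun t ht =>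
        le_of_lt (hT₀ t (le_trans (le_max_left _ _) (le_of_lt ht)))
      have hfin := hGint.measure_ge_lt_top (show (0:ℝ) < (G 0 + A) / 2 by linarith)
      have hIoi : (volume : Measure ℝ).restrict (Set.Ioi 0) (Set.Ioi T₁) = ⊤ := by
        rw [Measure.restrict_apply measurableSet_Ioi]
        have : Set.Ioi T₁ ∩ Set.Ioi (0:ℝ) = Set.Ioi T₁ := by
          apply Set.inter_eq_self_of_subset_left
          exact fun t ht => Set.mem_Ioi.mpr (lt_of_le_of_lt (le_max_right _ _) ht)
        rw [this, Real.volume_Ioi]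
      have := lt_of_le_of_lt (le_trans hIoi.ge (measure_mono hsub)) hfin
      exact absurd this (by simp)
    have hG0 : G 0 = v (emb N x) ^ 2 := by
      simp [hGdef, hudef, Psi_symm_apply]
    have habs : |A| ≤ φ x := by
      have h1 : |A| ≤ ∫ t in Set.Ioi (0:ℝ), |G' t| := by
        simpa [hAdef] using norm_integral_le_integral_norm (μ := (volume : Measure ℝ).restrict (Set.Ioi 0)) G'
      refine le_trans h1 (integral_mono hG'int.abs hfx ?_)
      exact fun t => hbound t
    rw [← hG0]
    have : G 0 = -A := by linarith
    rw [this]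
    exact le_trans (neg_le_abs A) habs
  -- integrate the pointwise bound
  have hv0meas : AEStronglyMeasurable (fun x => (v (emb N x))^2) (volume :
      Measure (EuclideanSpace ℝ (Fin N))) :=
    ((hdiff.continuous.comp (continuous_emb N)).pow 2).aestronglyMeasurable
  have hv0int : Integrable (fun x => (v (emb N x))^2) volume := by
    refine Integrable.mono' hφ_int hv0meas ?_
    filter_upwards [hae] with x hx
    rw [Real.norm_eq_abs, abs_of_nonneg (sq_nonneg _)]
    exact hx
  refine ⟨hv0int, ?_⟩
  have h1 : ∫ x, (v (emb N x))^2 ≤ ∫ x, φ x := integral_mono_ae hv0int hφ_int hae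
  rw [hφ_eq] at h1
  refine le_trans h1 ?_
  rw [← integral_const_mul]
  refine integral_mono hg_int ((hg2int.add (hv2int.const_mul (m^2))).const_mul m⁻¹) fun X => ?_
  have hvt := hvtsq X
  have hmi : 0 < m⁻¹ := inv_pos.mpr hm
  have expand : m⁻¹ * (‖fderiv ℝ v X‖^2 + m^2 * v X^2)
      = m⁻¹ * ‖fderiv ℝ v X‖^2 + m * v X ^2 := by
    field_simp
  simp only [hgdef]
  rw [expand]
  have := mul_le_mul_of_nonneg_left hvt hmi.le
  linarith

lemma norm_gradient_eq {N : ℕ} (v : EuclideanSpace ℝ (Fin (N+1)) → ℝ)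
    (X : EuclideanSpace ℝ (Fin (N+1))) : ‖gradient v X‖ = ‖fderiv ℝ v X‖ :=
  (InnerProductSpace.toDual ℝ _).symm.norm_map _


/-- non-existence for `λ ≤ 0`: if `F_s(x,s)s ≥ 0` a.e., `W ≥ 0`, `λ ≤ 0`
and `ω < m`, then any weak solution `v ∈ H¹(ℝ^{N+1}_+)` of the extension system vanishes. -/
theorem stmt_9 (N : ℕ) (hN : 2 ≤ N) (m ω lam : ℝ) (hm : 0 < m) (hω : ω < m) (hlam : lam ≤ 0)
    (W : EuclideanSpace ℝ (Fin N) → ℝ) (hW : ∀ x, 0 ≤ W x)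
    (Fs : EuclideanSpace ℝ (Fin N) → ℝ → ℝ)
    (hFs : ∀ᵐ x : EuclideanSpace ℝ (Fin N), ∀ s : ℝ, 0 ≤ Fs x s * s)
    (v : EuclideanSpace ℝ (Fin (N+1)) → ℝ) (hv : H1 N v)
    (hsol : IsWeakSolution N m ω lam W Fs v) :
    ∀ᵐ X ∂(volume.restrict (upper N)), v X = 0 := by
  obtain ⟨hdiff, hv2, hg2⟩ := hv
  obtain ⟨hv0int, htr⟩ := trace_ineq N m hm v hdiff hv2 hg2
  set E : EuclideanSpace ℝ (Fin (N+1)) → ℝ := fun X => ‖fderiv ℝ v X‖^2 + m^2 * v X^2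
    with hEdef
  have hEint : Integrable E (volume.restrict (upper N)) :=
    hg2.integrable_sq.add (hv2.integrable_sq.const_mul _)
  have hE0 : ∀ X, 0 ≤ E X := fun X => by positivity
  set I : ℝ := ∫ X in upper N, E X with hIdef
  have hI0 : 0 ≤ I := integral_nonneg hE0
  have key := hsol v ⟨hdiff, hv2, hg2⟩
  have hLHS : (∫ X in upper N,
      ((inner ℝ (gradient v X) (gradient v X) : ℝ) + m^2 * v X * v X)) = I := by
    rw [hIdef]
    refine integral_congr_ae (Eventually.of_forall fun X => ?_)
    show (inner ℝ (gradient v X) (gradient v X) : ℝ) + m^2 * v X * v X = E X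
    rw [real_inner_self_eq_norm_sq, norm_gradient_eq]
    simp only [hEdef]
    ring
  rw [hLHS] at key
  set p : EuclideanSpace ℝ (Fin N) → ℝ := fun x =>
    (ω * v (emb N x)
      + lam * (∫ y : EuclideanSpace ℝ (Fin N), W (x - y) * (v (emb N y))^2) * v (emb N x)
      - Fs x (v (emb N x))) * v (emb N x) with hpdef
  have hple : ∀ᵐ x : EuclideanSpace ℝ (Fin N), p x ≤ ω * (v (emb N x))^2 := by
    filter_upwards [hFs] with x hx
    have hconv : 0 ≤ ∫ y : EuclideanSpace ℝ (Fin N), W (x - y) * (v (emb N y))^2 :=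
      integral_nonneg fun y => mul_nonneg (hW _) (sq_nonneg _)
    have h2 := hx (v (emb N x))
    have h3 : lam * (∫ y : EuclideanSpace ℝ (Fin N), W (x - y) * (v (emb N y))^2) ≤ 0 :=
      mul_nonpos_of_nonpos_of_nonneg hlam hconv
    simp only [hpdef]
    nlinarith [sq_nonneg (v (emb N x)),
      mul_nonpos_of_nonpos_of_nonneg h3 (sq_nonneg (v (emb N x)))]
  set T : ℝ := ∫ x : EuclideanSpace ℝ (Fin N), (v (emb N x))^2 with hTdef
  have hT0 : 0 ≤ T := integral_nonneg fun x => sq_nonneg _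
  have htr' : m * T ≤ I := by
    have := mul_le_mul_of_nonneg_left htr hm.le
    rwa [← mul_assoc, mul_inv_cancel₀ (ne_of_gt hm), one_mul] at this
  have hIzero : I = 0 := by
    by_cases hpint : Integrable p volume
    · have h4 : ∫ x, p x ≤ ω * T := by
        rw [hTdef, ← integral_const_mul]
        exact integral_mono_ae hpint (hv0int.const_mul ω) hple
      have h5 : (m - ω) * T ≤ 0 := by nlinarith [key, h4, htr']
      have h6 : T ≤ 0 := by
        by_contra h
        push_neg at h
        exact absurd h5 (not_le.mpr (mul_pos (sub_pos.mpr hω) h))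
      have hT : T = 0 := le_antisymm h6 hT0
      have : I ≤ 0 := by
        rw [key]
        calc ∫ x, p x ≤ ω * T := h4
        _ = 0 := by rw [hT, mul_zero]
      linarith
    · rw [key, integral_undef hpint]
  have hae0 : E =ᵐ[volume.restrict (upper N)] 0 :=
    (integral_eq_zero_iff_of_nonneg (fun X => hE0 X) hEint).mp (by rw [← hIdef]; exact hIzero)
  filter_upwards [hae0] with X hX
  simp only [hEdef, Pi.zero_apply] at hX
  have hv2X : v X ^ 2 = 0 := by nlinarith [sq_nonneg ‖fderiv ℝ v X‖, sq_nonneg (v X), sq_nonneg m, mul_pos hm hm]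
  exact (pow_eq_zero_iff two_ne_zero).mp hv2X
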